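/- Let h_0 > 0, λ* = (π/(2h_0))², ψ*(x) = cos(π x/(2h_0)), R_0^D = sqrt((β_v β_h N_v*/N_h*) / ((D_h λ* + d_h + γ_h)(D_v λ* + r_v(1−q)))), and φ*(x) = (β_v N_v* / (N_h* R_0^D (D_v λ* + r_v(1−q)))) ψ*(x). Then φ* and ψ* are strictly positive on (−h_0, h_0), vanish at x = ±h_0, and for every x ∈ (−h_0, h_0) the second-derivative identities −D_v φ*''(x) = (β_v N_v*/(N_h* R_0^D)) ψ*(x) − r_v(1−q) φ*(x) and −D_h ψ*''(x) = (β_h / R_0^D) φ*(x) − (d_h+γ_h) ψ*(x) hold; i.e. (φ*, ψ*) is a positive solution of the Dirichlet eigenvalue system on (−h_0, h_0) with eigenvalue parameter R_0^D. -/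

import Mathlib

/-- The explicit pair `(φ*, ψ*)` is a positive solution of the
Dirichlet eigenvalue system on `(-h₀, h₀)` with eigenvalue parameter `R₀ᴰ`. -/
theorem dirichlet_principal_eigenpair
    (βv βh rv dh γh Nv Nh q Dv Dh h0 : ℝ)
    (hβv : 0 < βv) (hβh : 0 < βh) (hrv : 0 < rv) (hdh : 0 < dh) (hγh : 0 < γh)
    (hNv : 0 < Nv) (hNh : 0 < Nh) (hq0 : 0 ≤ q) (hq1 : q < 1)
    (hDv : 0 < Dv) (hDh : 0 < Dh) (hh0 : 0 < h0)
    (lamStar R0D : ℝ) (ψs φs : ℝ → ℝ)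
    (hlam : lamStar = (Real.pi / (2 * h0)) ^ 2)
    (hψ : ψs = fun x => Real.cos (Real.pi * x / (2 * h0)))
    (hR0D : R0D = Real.sqrt ((βv * βh * Nv / Nh) /
        ((Dh * lamStar + dh + γh) * (Dv * lamStar + rv * (1 - q)))))
    (hφ : φs = fun x => βv * Nv / (Nh * R0D * (Dv * lamStar + rv * (1 - q))) * ψs x) :
    (∀ x ∈ Set.Ioo (-h0) h0, 0 < φs x) ∧
    (∀ x ∈ Set.Ioo (-h0) h0, 0 < ψs x) ∧
    φs (-h0) = 0 ∧ φs h0 = 0 ∧ ψs (-h0) = 0 ∧ ψs h0 = 0 ∧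
    (∀ x ∈ Set.Ioo (-h0) h0,
      -Dv * deriv (deriv φs) x = βv * Nv / (Nh * R0D) * ψs x - rv * (1 - q) * φs x) ∧
    (∀ x ∈ Set.Ioo (-h0) h0,
      -Dh * deriv (deriv ψs) x = βh / R0D * φs x - (dh + γh) * ψs x) := by
  have h2h0 : (0:ℝ) < 2 * h0 := by linarith
  set k : ℝ := Real.pi / (2 * h0) with hkdef
  have hk : 0 < k := div_pos Real.pi_pos h2h0
  have hψ' : ψs = fun x => Real.cos (k * x) := by
    rw [hψ]; funext x; congr 1; rw [hkdef]; ring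
  have hkh : k * h0 = Real.pi / 2 := by
    rw [hkdef]; field_simp
  -- lamStar = k^2 and is nonnegative
  have hlam' : lamStar = k ^ 2 := by rw [hlam, hkdef]
  have hlamnn : 0 ≤ lamStar := by rw [hlam']; positivity
  -- positivity of the denominator factors
  have hB : 0 < Dv * lamStar + rv * (1 - q) := by nlinarith
  have hA : 0 < Dh * lamStar + dh + γh := by nlinarith
  have hArg : 0 < (βv * βh * Nv / Nh) /
      ((Dh * lamStar + dh + γh) * (Dv * lamStar + rv * (1 - q))) := by positivity
  have hR0pos : 0 < R0D := by rw [hR0D]; exact Real.sqrt_pos.mpr hArg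
  have hsq : R0D ^ 2 = (βv * βh * Nv / Nh) /
      ((Dh * lamStar + dh + γh) * (Dv * lamStar + rv * (1 - q))) := by
    rw [hR0D, Real.sq_sqrt hArg.le]
  set c : ℝ := βv * Nv / (Nh * R0D * (Dv * lamStar + rv * (1 - q))) with hcdef
  have hcpos : 0 < c := by rw [hcdef]; positivity
  have hφ' : φs = fun x => c * ψs x := by rw [hφ, hcdef]
  -- derivatives
  have hd1 : ∀ x : ℝ, HasDerivAt ψs (-Real.sin (k * x) * k) x := by
    intro x
    rw [hψ']
    have h1 : HasDerivAt (fun x : ℝ => k * x) k x := by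
      simpa using (hasDerivAt_id x).const_mul k
    exact (Real.hasDerivAt_cos (k * x)).comp x h1
  have hd1' : deriv ψs = fun x => -Real.sin (k * x) * k := funext fun x => (hd1 x).deriv
  have hd2 : ∀ x : ℝ, HasDerivAt (deriv ψs) (-(k ^ 2) * Real.cos (k * x)) x := by
    intro x
    rw [hd1']
    have h1 : HasDerivAt (fun x : ℝ => k * x) k x := by
      simpa using (hasDerivAt_id x).const_mul k
    have h2 := (((Real.hasDerivAt_sin (k * x)).comp x h1).neg).mul_const k
    rw [show -(k ^ 2) * Real.cos (k * x) = -(Real.cos (k * x) * k) * k by ring]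
    exact h2
  have hψdd : ∀ x : ℝ, deriv (deriv ψs) x = -lamStar * ψs x := by
    intro x
    rw [(hd2 x).deriv, hψ', hlam']
  have hdφ1 : ∀ x : ℝ, HasDerivAt φs (c * (-Real.sin (k * x) * k)) x := by
    intro x; rw [hφ']; exact (hd1 x).const_mul c
  have hdφ1' : deriv φs = fun x => c * (-Real.sin (k * x) * k) :=
    funext fun x => (hdφ1 x).deriv
  have hdφ2 : ∀ x : ℝ, HasDerivAt (deriv φs) (c * (-(k ^ 2) * Real.cos (k * x))) x := by
    intro x
    rw [hdφ1']
    have h1 : HasDerivAt (fun x : ℝ => k * x) k x := by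
      simpa using (hasDerivAt_id x).const_mul k
    have h2 := ((((Real.hasDerivAt_sin (k * x)).comp x h1).neg).mul_const k).const_mul c
    rw [show c * (-(k ^ 2) * Real.cos (k * x)) = c * (-(Real.cos (k * x) * k) * k) by ring]
    exact h2
  have hφdd : ∀ x : ℝ, deriv (deriv φs) x = -lamStar * φs x := by
    intro x
    rw [(hdφ2 x).deriv, hφ', hψ', hlam']
    ring
  -- positivity of ψs on the interval
  have hψpos : ∀ x ∈ Set.Ioo (-h0) h0, 0 < ψs x := by
    intro x hx
    rw [hψ']
    apply Real.cos_pos_of_mem_Ioo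
    constructor
    · have := mul_lt_mul_of_pos_left hx.1 hk
      rw [mul_neg, hkh] at this
      simpa using this
    · have := mul_lt_mul_of_pos_left hx.2 hk
      rwa [hkh] at this
  have hψh : ψs h0 = 0 := by
    rw [hψ']
    show Real.cos (k * h0) = 0
    rw [hkh]; exact Real.cos_pi_div_two
  have hψnh : ψs (-h0) = 0 := by
    rw [hψ']
    show Real.cos (k * (-h0)) = 0
    rw [show k * (-h0) = -(Real.pi / 2) by rw [← hkh]; ring, Real.cos_neg]
    exact Real.cos_pi_div_two
  have hNh' : Nh ≠ 0 := ne_of_gt hNh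
  have hR0' : R0D ≠ 0 := ne_of_gt hR0pos
  have hB' : Dv * lamStar + rv * (1 - q) ≠ 0 := ne_of_gt hB
  have hA' : Dh * lamStar + dh + γh ≠ 0 := ne_of_gt hA
  refine ⟨?_, hψpos, ?_, ?_, hψnh, hψh, ?_, ?_⟩
  · intro x hx
    rw [hφ']
    exact mul_pos hcpos (hψpos x hx)
  · rw [hφ']; simp [hψnh]
  · rw [hφ']; simp [hψh]
  · intro x hx
    rw [hφdd x, hφ']
    simp only
    rw [hcdef]
    field_simp
    ring
  · intro x hx
    rw [hψdd x, hφ']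
    simp only
    rw [hcdef]
    have hsq' : R0D ^ 2 * (Nh * ((Dh * lamStar + dh + γh) * (Dv * lamStar + rv * (1 - q)))) =
        βv * βh * Nv := by
      rw [hsq]; field_simp
      exact div_self (ne_of_gt (by nlinarith))
    have key : βh / R0D * (βv * Nv / (Nh * R0D * (Dv * lamStar + rv * (1 - q)))) =
        Dh * lamStar + dh + γh := by
      rw [div_mul_div_comm, div_eq_iff (by positivity)]
      linear_combination -hsq'
    linear_combination -ψs x * key
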